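/- For every dimension d ≥ 3, every ε > 0 and every b > 0 one can find b̃ > b and functions χ₁, χ₂ : ℝ^d → ℝ which are Lipschitz continuous and continuously differentiable outside a closed Lebesgue-null set, with χ₁² + χ₂² ≡ 1, χ₁ = 1 on {|x| ≤ b}, χ₁ = 0 on {|x| > b̃}, such that in addition for i = 1, 2 and every ψ ∈ C_c^∞(ℝ^d; ℂ) one has ∫_{ℝ^d} |∇χᵢ(x)|² |ψ(x)|² dx ≤ 4ε ∫_{ℝ^d} |∇ψ(x)|² dx (the integrand |∇χᵢ|²|ψ|² being defined almost everywhere). -/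

import Mathlib

/-!
STATEMENT 1: For every `d ≥ 3`, `ε > 0`, `b > 0` there are `b̃ > b` and Lipschitz functions
`χ₁ χ₂ : ℝ^d → ℝ`, continuously differentiable outside a closed Lebesgue-null set, with
`χ₁² + χ₂² ≡ 1`, `χ₁ = 1` on `{‖x‖ ≤ b}`, `χ₁ = 0` on `{‖x‖ > b̃}`, such that in addition
for `i = 1, 2` and every `ψ ∈ C_c^∞(ℝ^d; ℂ)`:
`∫ |∇χᵢ|² |ψ|² ≤ 4ε ∫ |∇ψ|²`.

For a complex-valued `ψ` the squared Euclidean norm of the gradient `|∇ψ(x)|²` is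
`∑ i, ‖∂ᵢψ(x)‖²`, expressed via `fderiv ℝ ψ x` applied to the standard basis vectors;
for a real-valued `χ` it is `‖fderiv ℝ χ x‖²` (operator norm = norm of the gradient).
The integrand `|∇χᵢ|²|ψ|²` is defined almost everywhere (Lean's `fderiv` takes the junk
value `0` at points of non-differentiability, which form a null set by Rademacher).
-/

open MeasureTheory

noncomputable def gradSqC1 (d : ℕ) (ψ : EuclideanSpace ℝ (Fin d) → ℂ)
    (x : EuclideanSpace ℝ (Fin d)) : ℝ :=
  ∑ i, ‖fderiv ℝ ψ x (EuclideanSpace.single i 1)‖ ^ 2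

section AuxHardy
open Real Metric Set
open scoped ENNReal NNReal Topology

lemma ofReal_norm_eq_coe_nnnorm {E : Type*} [SeminormedAddCommGroup E] (a : E) :
    ENNReal.ofReal ‖a‖ = (‖a‖₊ : ℝ≥0∞) := by
  rw [← coe_nnnorm, ENNReal.ofReal_coe_nnreal]

lemma opnorm_sq_le (d : ℕ) (T : EuclideanSpace ℝ (Fin d) →L[ℝ] ℂ) :
    ‖T‖ ^ 2 ≤ ∑ i, ‖T (EuclideanSpace.single i 1)‖ ^ 2 := by
  have hsum_nonneg : (0:ℝ) ≤ ∑ i, ‖T (EuclideanSpace.single i 1)‖ ^ 2 :=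
    Finset.sum_nonneg fun i _ => sq_nonneg _
  have h : ‖T‖ ≤ Real.sqrt (∑ i, ‖T (EuclideanSpace.single i 1)‖ ^ 2) := by
    apply T.opNorm_le_bound (Real.sqrt_nonneg _)
    intro v
    have hv : T v = ∑ i, v i • T (EuclideanSpace.single i 1) := by
      have hrep : v = ∑ i, v i • (EuclideanSpace.single i 1 : EuclideanSpace ℝ (Fin d)) := by
        have := (EuclideanSpace.basisFun (Fin d) ℝ).sum_repr v
        simp only [EuclideanSpace.basisFun_repr, EuclideanSpace.basisFun_apply] at this
        exact this.symm
      conv_lhs => rw [hrep]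
      simp [map_sum]
    rw [hv]
    calc ‖∑ i, v i • T (EuclideanSpace.single i 1)‖
        ≤ ∑ i, ‖v i • T (EuclideanSpace.single i 1)‖ := norm_sum_le _ _
      _ = ∑ i, |v i| * ‖T (EuclideanSpace.single i 1)‖ := by simp [norm_smul]
      _ ≤ Real.sqrt (∑ i, ‖T (EuclideanSpace.single i 1)‖ ^ 2) * ‖v‖ := by
          have h2 := Finset.sum_mul_sq_le_sq_mul_sq Finset.univ
            (fun i => |v i|) (fun i => ‖T (EuclideanSpace.single i 1)‖)
          have hX : (0:ℝ) ≤ ∑ i, |v i| * ‖T (EuclideanSpace.single i 1)‖ :=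
            Finset.sum_nonneg fun i _ => mul_nonneg (abs_nonneg _) (norm_nonneg _)
          have hnv : ‖v‖ = Real.sqrt (∑ i, |v i| ^ 2) := by
            simp [EuclideanSpace.norm_eq, Real.norm_eq_abs]
          calc (∑ i, |v i| * ‖T (EuclideanSpace.single i 1)‖)
              = Real.sqrt ((∑ i, |v i| * ‖T (EuclideanSpace.single i 1)‖) ^ 2) :=
                (Real.sqrt_sq hX).symm
            _ ≤ Real.sqrt ((∑ i, |v i| ^ 2) * ∑ i, ‖T (EuclideanSpace.single i 1)‖ ^ 2) :=
                Real.sqrt_le_sqrt h2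
            _ = Real.sqrt (∑ i, |v i| ^ 2) * Real.sqrt (∑ i, ‖T (EuclideanSpace.single i 1)‖ ^ 2) :=
                Real.sqrt_mul (Finset.sum_nonneg fun i _ => sq_nonneg _) _
            _ = _ := by rw [hnv]; ring
  calc ‖T‖ ^ 2 ≤ Real.sqrt (∑ i, ‖T (EuclideanSpace.single i 1)‖ ^ 2) ^ 2 :=
        pow_le_pow_left₀ (norm_nonneg _) h 2
    _ = _ := Real.sq_sqrt hsum_nonneg

lemma exists_M : ∃ M : ℝ, 1 ≤ M ∧ ∀ s : ℝ, |deriv Real.smoothTransition s| ≤ M := by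
  have hc : Continuous (deriv Real.smoothTransition) :=
    (Real.smoothTransition.contDiff (n := ⊤)).continuous_deriv (by exact_mod_cast le_top)
  obtain ⟨c, _, hc2'⟩ := (isCompact_Icc (a := (0:ℝ)) (b := 1)).exists_isMaxOn
    (nonempty_Icc.2 zero_le_one) (hc.abs.continuousOn)
  have hc2 : ∀ y ∈ Icc (0:ℝ) 1, |deriv Real.smoothTransition y| ≤ |deriv Real.smoothTransition c| :=
    fun y hy => hc2' hy
  refine ⟨max 1 |deriv Real.smoothTransition c|, le_max_left _ _, fun s => ?_⟩
  rcases le_or_gt s 0 with hs | hs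
  · rcases lt_or_eq_of_le hs with hs | hs
    · have : deriv Real.smoothTransition s = 0 := by
        have hev : Real.smoothTransition =ᶠ[nhds s] (fun _ => (0:ℝ)) := by
          filter_upwards [Iio_mem_nhds hs] with y hy
          exact Real.smoothTransition.zero_of_nonpos (le_of_lt hy)
        rw [hev.deriv_eq, deriv_const]
      rw [this]; simpa using le_max_left 1 _
    · subst hs
      exact le_trans (hc2 0 (by norm_num)) (le_max_right _ _)
  · rcases le_or_gt s 1 with hs1 | hs1
    · exact le_trans (hc2 s ⟨le_of_lt hs, hs1⟩) (le_max_right _ _)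
    · have : deriv Real.smoothTransition s = 0 := by
        have hev : Real.smoothTransition =ᶠ[nhds s] (fun _ => (1:ℝ)) := by
          filter_upwards [Ioi_mem_nhds hs1] with y hy
          exact Real.smoothTransition.one_of_one_le (le_of_lt hy)
        rw [hev.deriv_eq, deriv_const]
      rw [this]; simpa using le_max_left 1 _

noncomputable def uu (b L r : ℝ) : ℝ := (π/2) * Real.smoothTransition (Real.log (r/b) / L)

lemma uu_zero {b L r : ℝ} (hb : 0 < b) (hL : 0 < L) (hr0 : 0 ≤ r) (hr : r ≤ b) :
    uu b L r = 0 := by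
  unfold uu
  rcases eq_or_lt_of_le hr0 with h | h
  · rw [← h]
    simp [Real.smoothTransition.zero_of_nonpos, Real.log_zero]
  · have : Real.log (r/b) ≤ 0 :=
      Real.log_nonpos (by positivity) ((div_le_one hb).2 hr)
    rw [Real.smoothTransition.zero_of_nonpos (div_nonpos_of_nonpos_of_nonneg this hL.le)]
    ring

lemma uu_top {b L r : ℝ} (hb : 0 < b) (hL : 0 < L) (hr : b * Real.exp L ≤ r) :
    uu b L r = π/2 := by
  unfold uu
  have hrpos : 0 < r := lt_of_lt_of_le (by positivity) hr
  have h1 : L ≤ Real.log (r/b) := by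
    rw [Real.le_log_iff_exp_le (by positivity)]
    rw [le_div_iff₀ hb]
    linarith [hr]
  rw [Real.smoothTransition.one_of_one_le ((one_le_div hL).2 h1)]
  ring

lemma hasDerivAt_uu {b L r : ℝ} (hb : 0 < b) (hL : 0 < L) (hr : 0 < r) :
    HasDerivAt (uu b L)
      ((π/2) * (deriv Real.smoothTransition (Real.log (r/b) / L) * (1/(L*r)))) r := by
  have h0 : HasDerivAt (fun s : ℝ => s / b) (1/b) r := by
    simpa using (hasDerivAt_id r).div_const b
  have h1 : HasDerivAt (fun s : ℝ => Real.log (s/b)) (1/r) r := by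
    have := (Real.hasDerivAt_log (by positivity : r/b ≠ 0)).comp r h0
    rw [show (1:ℝ)/r = (r/b)⁻¹ * (1/b) by field_simp]
    exact this
  have h2 : HasDerivAt (fun s : ℝ => Real.log (s/b) / L) (1/(L*r)) r := by
    have := h1.div_const L
    rw [show (1:ℝ)/(L*r) = 1/r/L by rw [div_div, mul_comm]]
    exact this
  have hT : HasDerivAt Real.smoothTransition
      (deriv Real.smoothTransition (Real.log (r/b) / L)) (Real.log (r/b) / L) :=
    ((Real.smoothTransition.contDiff (n := 1)).differentiable one_ne_zero _).hasDerivAt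
  exact ((hT.comp r h2).const_mul (π/2) : _)

noncomputable def chif {d : ℕ} (F : ℝ → ℝ) (b L : ℝ) (x : EuclideanSpace ℝ (Fin d)) : ℝ :=
  F (uu b L ‖x‖)

lemma chif_ev_inner {d : ℕ} (F : ℝ → ℝ) {b L : ℝ} (hb : 0 < b) (hL : 0 < L)
    {x : EuclideanSpace ℝ (Fin d)} (hx : ‖x‖ < b) :
    chif F b L =ᶠ[nhds x] (fun _ => F 0) := by
  have hopen : IsOpen {y : EuclideanSpace ℝ (Fin d) | ‖y‖ < b} :=
    isOpen_lt continuous_norm continuous_const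
  filter_upwards [hopen.mem_nhds hx] with y hy
  simp only [chif]
  rw [uu_zero hb hL (norm_nonneg _) (le_of_lt hy)]

lemma chif_ev_outer {d : ℕ} (F : ℝ → ℝ) {b L : ℝ} (hb : 0 < b) (hL : 0 < L)
    {x : EuclideanSpace ℝ (Fin d)} (hx : b * Real.exp L < ‖x‖) :
    chif F b L =ᶠ[nhds x] (fun _ => F (π/2)) := by
  have hopen : IsOpen {y : EuclideanSpace ℝ (Fin d) | b * Real.exp L < ‖y‖} :=
    isOpen_lt continuous_const continuous_norm
  filter_upwards [hopen.mem_nhds hx] with y hy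
  simp only [chif]
  rw [uu_top hb hL (le_of_lt hy)]

lemma contDiffAt_chif {d : ℕ} {F : ℝ → ℝ} (hF : ContDiff ℝ 1 F) {b L : ℝ}
    (hb : 0 < b) (hL : 0 < L) (x : EuclideanSpace ℝ (Fin d)) :
    ContDiffAt ℝ 1 (chif F b L) x := by
  rcases lt_or_ge ‖x‖ b with hx | hx
  · exact contDiffAt_const.congr_of_eventuallyEq (chif_ev_inner F hb hL hx)
  · have hx0 : x ≠ 0 := by
      intro h; rw [h] at hx; simp at hx; linarith
    have hinner : ContDiffAt ℝ 1 (fun r : ℝ => Real.log (r/b) / L) ‖x‖ := by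
      have hne : ‖x‖ / b ≠ 0 := ne_of_gt (div_pos (lt_of_lt_of_le hb hx) hb)
      have hdiv : ContDiffAt ℝ 1 (fun r : ℝ => r / b) ‖x‖ := contDiffAt_id.div_const b
      exact ((Real.contDiffAt_log.2 hne).comp ‖x‖ hdiv).div_const L
    have huu : ContDiffAt ℝ 1 (uu b L) ‖x‖ := by
      unfold uu
      exact contDiffAt_const.mul (Real.smoothTransition.contDiffAt.comp _ hinner)
    exact (hF.contDiffAt.comp _ huu).comp x (contDiffAt_norm ℝ hx0)

lemma fderiv_chif_inner {d : ℕ} (F : ℝ → ℝ) {b L : ℝ} (hb : 0 < b) (hL : 0 < L)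
    {x : EuclideanSpace ℝ (Fin d)} (hx : ‖x‖ < b) :
    fderiv ℝ (chif F b L) x = 0 := by
  rw [(chif_ev_inner F hb hL hx).fderiv_eq]; exact fderiv_const_apply _

lemma fderiv_chif_outer {d : ℕ} (F : ℝ → ℝ) {b L : ℝ} (hb : 0 < b) (hL : 0 < L)
    {x : EuclideanSpace ℝ (Fin d)} (hx : b * Real.exp L < ‖x‖) :
    fderiv ℝ (chif F b L) x = 0 := by
  rw [(chif_ev_outer F hb hL hx).fderiv_eq]; exact fderiv_const_apply _

lemma fderiv_chif_bound {d : ℕ} {F : ℝ → ℝ} (hF : ContDiff ℝ 1 F)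
    (hF1 : ∀ s, |deriv F s| ≤ 1) {M b L : ℝ} (hM0 : 0 ≤ M)
    (hM : ∀ s, |deriv Real.smoothTransition s| ≤ M)
    (hb : 0 < b) (hL : 0 < L) {x : EuclideanSpace ℝ (Fin d)} (hx : x ≠ 0) :
    ‖fderiv ℝ (chif F b L) x‖ ≤ π/2 * M / (L * ‖x‖) := by
  have hxn : 0 < ‖x‖ := norm_pos_iff.2 hx
  set s := Real.log (‖x‖/b) / L with hs
  have hu : HasDerivAt (uu b L) ((π/2) * (deriv Real.smoothTransition s * (1/(L*‖x‖)))) ‖x‖ :=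
    hasDerivAt_uu hb hL hxn
  have hFd : HasDerivAt F (deriv F (uu b L ‖x‖)) (uu b L ‖x‖) :=
    ((hF.differentiable one_ne_zero) _).hasDerivAt
  have hg : HasDerivAt (fun r => F (uu b L r))
      (deriv F (uu b L ‖x‖) * ((π/2) * (deriv Real.smoothTransition s * (1/(L*‖x‖))))) ‖x‖ :=
    hFd.comp _ hu
  have hnorm : HasFDerivAt (fun y : EuclideanSpace ℝ (Fin d) => ‖y‖)
      (fderiv ℝ (fun y : EuclideanSpace ℝ (Fin d) => ‖y‖) x) x :=
    ((contDiffAt_norm ℝ hx).differentiableAt one_ne_zero).hasFDerivAt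
  have hchain : HasFDerivAt (chif F b L)
      ((deriv F (uu b L ‖x‖) * ((π/2) * (deriv Real.smoothTransition s * (1/(L*‖x‖))))) •
        fderiv ℝ (fun y : EuclideanSpace ℝ (Fin d) => ‖y‖) x) x :=
    hg.comp_hasFDerivAt x hnorm
  rw [hchain.fderiv]
  rw [norm_smul]
  have hnle : ‖fderiv ℝ (fun y : EuclideanSpace ℝ (Fin d) => ‖y‖) x‖ ≤ 1 := by
    have := norm_fderiv_le_of_lipschitz ℝ (lipschitzWith_one_norm
      (E := EuclideanSpace ℝ (Fin d))) (x₀ := x)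
    simpa using this
  calc ‖deriv F (uu b L ‖x‖) * ((π/2) * (deriv Real.smoothTransition s * (1/(L*‖x‖))))‖ *
        ‖fderiv ℝ (fun y : EuclideanSpace ℝ (Fin d) => ‖y‖) x‖
      ≤ ‖deriv F (uu b L ‖x‖) * ((π/2) * (deriv Real.smoothTransition s * (1/(L*‖x‖))))‖ * 1 := by
        apply mul_le_mul_of_nonneg_left hnle (norm_nonneg _)
    _ = |deriv F (uu b L ‖x‖)| * ((π/2) * (|deriv Real.smoothTransition s| * (1/(L*‖x‖)))) := by
        rw [mul_one, Real.norm_eq_abs, abs_mul, abs_mul, abs_mul]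
        rw [abs_of_pos (by positivity : (0:ℝ) < π/2), abs_of_pos (by positivity : (0:ℝ) < 1/(L*‖x‖))]
    _ ≤ 1 * ((π/2) * (M * (1/(L*‖x‖)))) := by
        apply mul_le_mul (hF1 _)
        · apply mul_le_mul_of_nonneg_left _ (by positivity)
          exact mul_le_mul_of_nonneg_right (hM _) (by positivity)
        · positivity
        · norm_num
    _ = π/2 * M / (L * ‖x‖) := by field_simp

lemma shell_lintegral_bound {d : ℕ} (hd : 0 < d) {b : ℝ} (hb : 0 < b) (n : ℕ) :
    ∫⁻ x in {x : EuclideanSpace ℝ (Fin d) | b ≤ ‖x‖ ∧ ‖x‖ ≤ b * Real.exp n},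
      (‖x‖₊ : ℝ≥0∞) ^ (-(d:ℝ)) ∂volume
      ≤ n * (ENNReal.ofReal (Real.exp 1 ^ d) *
          volume (ball (0 : EuclideanSpace ℝ (Fin d)) 1)) := by
  haveI : Nontrivial (EuclideanSpace ℝ (Fin d)) := by
    apply Module.nontrivial_of_finrank_pos (R := ℝ)
    rw [finrank_euclideanSpace_fin]
    exact hd
  induction n with
  | zero =>
    simp only [Nat.cast_zero]
    have hsub : {x : EuclideanSpace ℝ (Fin d) | b ≤ ‖x‖ ∧ ‖x‖ ≤ b * Real.exp 0}
        ⊆ sphere (0 : EuclideanSpace ℝ (Fin d)) b := by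
      intro x hx
      simp only [Real.exp_zero, mul_one] at hx
      simp [mem_sphere_iff_norm, le_antisymm hx.2 hx.1]
    rw [setLIntegral_measure_zero _ _
      (measure_mono_null hsub (Measure.addHaar_sphere volume 0 b))]
    simp
  | succ n ih =>
    rw [show ((n+1:ℕ):ℝ) = (n:ℝ)+1 from by push_cast; ring]
    set Cd := ENNReal.ofReal (Real.exp 1 ^ d) *
      volume (ball (0 : EuclideanSpace ℝ (Fin d)) 1) with hCd
    have hsub : {x : EuclideanSpace ℝ (Fin d) | b ≤ ‖x‖ ∧ ‖x‖ ≤ b * Real.exp (n+1)}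
        ⊆ {x | b ≤ ‖x‖ ∧ ‖x‖ ≤ b * Real.exp n} ∪
          {x | b * Real.exp n ≤ ‖x‖ ∧ ‖x‖ ≤ b * Real.exp (n+1)} := by
      intro x hx
      rcases le_or_gt ‖x‖ (b * Real.exp n) with h | h
      · exact Or.inl ⟨hx.1, h⟩
      · exact Or.inr ⟨le_of_lt h, hx.2⟩
    calc ∫⁻ x in {x : EuclideanSpace ℝ (Fin d) | b ≤ ‖x‖ ∧ ‖x‖ ≤ b * Real.exp (n+1)},
          (‖x‖₊ : ℝ≥0∞) ^ (-(d:ℝ)) ∂volume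
        ≤ ∫⁻ x in ({x : EuclideanSpace ℝ (Fin d) | b ≤ ‖x‖ ∧ ‖x‖ ≤ b * Real.exp n} ∪
            {x | b * Real.exp n ≤ ‖x‖ ∧ ‖x‖ ≤ b * Real.exp (n+1)}),
            (‖x‖₊ : ℝ≥0∞) ^ (-(d:ℝ)) ∂volume := lintegral_mono_set hsub
      _ ≤ (∫⁻ x in {x : EuclideanSpace ℝ (Fin d) | b ≤ ‖x‖ ∧ ‖x‖ ≤ b * Real.exp n},
            (‖x‖₊ : ℝ≥0∞) ^ (-(d:ℝ)) ∂volume) +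
          ∫⁻ x in {x : EuclideanSpace ℝ (Fin d) |
              b * Real.exp n ≤ ‖x‖ ∧ ‖x‖ ≤ b * Real.exp (n+1)},
            (‖x‖₊ : ℝ≥0∞) ^ (-(d:ℝ)) ∂volume := lintegral_union_le _ _ _
      _ ≤ n * Cd + Cd := by
          apply add_le_add ih
          -- shell piece
          have hShMeas : MeasurableSet {x : EuclideanSpace ℝ (Fin d) |
              b * Real.exp n ≤ ‖x‖ ∧ ‖x‖ ≤ b * Real.exp (n+1)} :=
            (measurableSet_le measurable_const measurable_norm).inter
              (measurableSet_le measurable_norm measurable_const)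
          have hbe : (0:ℝ) < b * Real.exp n := by positivity
          calc ∫⁻ x in {x : EuclideanSpace ℝ (Fin d) |
                b * Real.exp n ≤ ‖x‖ ∧ ‖x‖ ≤ b * Real.exp (n+1)},
                (‖x‖₊ : ℝ≥0∞) ^ (-(d:ℝ)) ∂volume
              ≤ ∫⁻ _x in {x : EuclideanSpace ℝ (Fin d) |
                b * Real.exp n ≤ ‖x‖ ∧ ‖x‖ ≤ b * Real.exp (n+1)},
                ENNReal.ofReal (b * Real.exp n) ^ (-(d:ℝ)) ∂volume := by
                apply setLIntegral_mono' hShMeas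
                intro x hx
                have h1 : ENNReal.ofReal (b * Real.exp n) ≤ (‖x‖₊ : ℝ≥0∞) := by
                  rw [← ofReal_norm_eq_coe_nnnorm]
                  exact ENNReal.ofReal_le_ofReal hx.1
                rw [ENNReal.rpow_neg, ENNReal.rpow_neg]
                exact ENNReal.inv_le_inv.2 (ENNReal.rpow_le_rpow h1 (by positivity))
            _ = ENNReal.ofReal (b * Real.exp n) ^ (-(d:ℝ)) *
                volume {x : EuclideanSpace ℝ (Fin d) |
                  b * Real.exp n ≤ ‖x‖ ∧ ‖x‖ ≤ b * Real.exp (n+1)} :=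
                setLIntegral_const _ _
            _ ≤ ENNReal.ofReal (b * Real.exp n) ^ (-(d:ℝ)) *
                volume (closedBall (0 : EuclideanSpace ℝ (Fin d)) (b * Real.exp (n+1))) := by
                apply mul_le_mul_right (measure_mono ?_)
                intro x hx
                rw [mem_closedBall_zero_iff]
                exact hx.2
            _ = Cd := by
                rw [Measure.addHaar_closedBall volume 0 (by positivity)]
                rw [finrank_euclideanSpace_fin]
                have hsplit : (b * Real.exp ((n:ℝ)+1)) ^ d
                    = (b * Real.exp n) ^ d * Real.exp 1 ^ d := by
                  rw [← mul_pow, Real.exp_add]; ring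
                have hpow : ENNReal.ofReal (b * Real.exp n) ^ (-(d:ℝ))
                    = (ENNReal.ofReal ((b * Real.exp n) ^ d))⁻¹ := by
                  rw [ENNReal.rpow_neg, ENNReal.ofReal_rpow_of_pos hbe, Real.rpow_natCast]
                rw [hsplit, hpow, ENNReal.ofReal_mul (by positivity), hCd]
                rw [show (ENNReal.ofReal ((b * Real.exp n) ^ d))⁻¹ *
                    (ENNReal.ofReal ((b * Real.exp n) ^ d) * ENNReal.ofReal (Real.exp 1 ^ d) *
                      volume (ball (0 : EuclideanSpace ℝ (Fin d)) 1))
                    = ((ENNReal.ofReal ((b * Real.exp n) ^ d))⁻¹ *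
                        ENNReal.ofReal ((b * Real.exp n) ^ d)) *
                      (ENNReal.ofReal (Real.exp 1 ^ d) *
                        volume (ball (0 : EuclideanSpace ℝ (Fin d)) 1)) by ring]
                rw [ENNReal.inv_mul_cancel (by simp [hbe, pow_pos]) ENNReal.ofReal_ne_top, one_mul]
      _ = ((n+1 : ℕ) : ℝ≥0∞) * Cd := by push_cast; ring


noncomputable def QcE (d : ℕ) (Cc : ℝ) : ℝ≥0∞ :=
  (ENNReal.ofReal Cc ^ (2:ℝ) *
    (ENNReal.ofReal (Real.exp 1 ^ d) *
      volume (ball (0:EuclideanSpace ℝ (Fin d)) 1)) ^ (2/(d:ℝ))) *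
  ((SNormLESNormFDerivOfEqConst (F := ℂ)
      (volume : Measure (EuclideanSpace ℝ (Fin d))) (((2:ℝ≥0)):ℝ) : ℝ≥0) : ℝ≥0∞) ^ (2:ℝ)

lemma QcE_ne_top (d : ℕ) (hd : 3 ≤ d) (Cc : ℝ) : QcE d Cc ≠ ⊤ := by
  unfold QcE
  apply ENNReal.mul_ne_top
  apply ENNReal.mul_ne_top
  · exact ENNReal.rpow_ne_top_of_nonneg (by norm_num) ENNReal.ofReal_ne_top
  · apply ENNReal.rpow_ne_top_of_nonneg (by positivity)
    exact ENNReal.mul_ne_top ENNReal.ofReal_ne_top measure_ball_lt_top.ne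
  · exact ENNReal.rpow_ne_top_of_nonneg (by norm_num) ENNReal.coe_ne_top

lemma gradSq_integrable {d : ℕ} (ψ : EuclideanSpace ℝ (Fin d) → ℂ)
    (hψ : ContDiff ℝ (⊤:ℕ∞) ψ) (hψc : HasCompactSupport ψ) :
    Integrable (gradSqC1 d ψ) volume ∧ Continuous (gradSqC1 d ψ) := by
  have hfc : Continuous (fderiv ℝ ψ) := hψ.continuous_fderiv (by simp)
  have hcont : Continuous (gradSqC1 d ψ) := by
    apply continuous_finset_sum
    intro i _
    exact (((ContinuousLinearMap.apply ℝ ℂ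
      (EuclideanSpace.single i (1:ℝ))).continuous.comp hfc).norm.pow 2)
  have hsupp : HasCompactSupport (gradSqC1 d ψ) := by
    have h1 : HasCompactSupport (fderiv ℝ ψ) := hψc.fderiv (𝕜 := ℝ)
    have : gradSqC1 d ψ = (fun T : EuclideanSpace ℝ (Fin d) →L[ℝ] ℂ =>
        ∑ i, ‖T (EuclideanSpace.single i 1)‖ ^ 2) ∘ (fderiv ℝ ψ) := rfl
    rw [this]
    exact h1.comp_left (by simp)
  exact ⟨hcont.integrable_of_hasCompactSupport hsupp, hcont⟩

lemma main_estimate {d : ℕ} (hd : 3 ≤ d) {b Cc : ℝ} (hb : 0 < b) (hCc : 0 ≤ Cc)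
    {n : ℕ} (hn : 1 ≤ n) {χ : EuclideanSpace ℝ (Fin d) → ℝ}
    (hz : ∀ x : EuclideanSpace ℝ (Fin d),
      ¬(b ≤ ‖x‖ ∧ ‖x‖ ≤ b * Real.exp n) → fderiv ℝ χ x = 0)
    (hbd : ∀ x : EuclideanSpace ℝ (Fin d), x ≠ 0 → ‖fderiv ℝ χ x‖ ≤ Cc / ((n:ℝ) * ‖x‖))
    (ψ : EuclideanSpace ℝ (Fin d) → ℂ) (hψ : ContDiff ℝ (⊤:ℕ∞) ψ)
    (hψc : HasCompactSupport ψ) :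
    (∫ x, ‖fderiv ℝ χ x‖ ^ 2 * ‖ψ x‖ ^ 2) ≤
      (QcE d Cc * (n:ℝ≥0∞)⁻¹ * ENNReal.ofReal (∫ x, gradSqC1 d ψ x)).toReal := by
  classical
  have hd3 : (3:ℝ) ≤ (d:ℝ) := by exact_mod_cast hd
  have hd0 : (0:ℝ) < (d:ℝ) := by linarith
  have hnR : (0:ℝ) < (n:ℝ) := by exact_mod_cast hn
  have hfm : Measurable fun x => fderiv ℝ χ x := measurable_fderiv ℝ χ
  have hWm : Measurable fun x : EuclideanSpace ℝ (Fin d) =>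
      (‖fderiv ℝ χ x‖₊ : ℝ≥0∞) := hfm.nnnorm.coe_nnreal_ennreal
  have hψcont : Continuous ψ := hψ.continuous
  have hgm : Measurable fun x : EuclideanSpace ℝ (Fin d) => (‖ψ x‖₊ : ℝ≥0∞) :=
    hψcont.measurable.nnnorm.coe_nnreal_ennreal
  set f : EuclideanSpace ℝ (Fin d) → ℝ≥0∞ :=
    fun x => (‖fderiv ℝ χ x‖₊ : ℝ≥0∞) ^ (2:ℕ) with hfdef
  set g : EuclideanSpace ℝ (Fin d) → ℝ≥0∞ :=
    fun x => (‖ψ x‖₊ : ℝ≥0∞) ^ (2:ℕ) with hgdef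
  set p : ℝ := (d:ℝ)/2 with hpdef
  set q : ℝ := (d:ℝ)/((d:ℝ)-2) with hqdef
  have hq_pos : 0 < q := by rw [hqdef]; exact div_pos (by linarith) (by linarith)
  have hpq : p.HolderConjugate q := by
    rw [Real.holderConjugate_iff]
    constructor
    · rw [hpdef]; linarith
    · rw [hpdef, hqdef]
      rw [inv_div, inv_div]
      field_simp
      ring
  -- LHS as lintegral
  have h0 : (∫ x, ‖fderiv ℝ χ x‖ ^ 2 * ‖ψ x‖ ^ 2) = (∫⁻ x, f x * g x).toReal := by
    rw [integral_eq_lintegral_of_nonneg_ae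
      (Filter.Eventually.of_forall fun x => mul_nonneg (sq_nonneg _) (sq_nonneg _))
      ((hfm.norm.pow_const 2).mul ((hψcont.norm.pow 2).measurable)).aestronglyMeasurable]
    congr 1
    apply lintegral_congr
    intro x
    rw [ENNReal.ofReal_mul (sq_nonneg _), ENNReal.ofReal_pow (norm_nonneg _),
      ENNReal.ofReal_pow (norm_nonneg _), ofReal_norm_eq_coe_nnnorm,
      ofReal_norm_eq_coe_nnnorm]
  -- Hölder
  have hHo : (∫⁻ x, f x * g x) ≤
      (∫⁻ x, f x ^ p) ^ (1/p) * (∫⁻ x, g x ^ q) ^ (1/q) := by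
    have := ENNReal.lintegral_mul_le_Lp_mul_Lq volume hpq
      ((hWm.pow_const 2).aemeasurable) ((hgm.pow_const 2).aemeasurable)
    simpa [Pi.mul_apply] using this
  -- term1
  set Cdv : ℝ≥0∞ := ENNReal.ofReal (Real.exp 1 ^ d) *
    volume (ball (0:EuclideanSpace ℝ (Fin d)) 1) with hCdv
  have hfp : ∀ x, f x ^ p = (‖fderiv ℝ χ x‖₊ : ℝ≥0∞) ^ ((d:ℝ)) := by
    intro x
    show (((‖fderiv ℝ χ x‖₊ : ℝ≥0∞)) ^ (2:ℕ)) ^ p = _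
    rw [← ENNReal.rpow_natCast _ 2, ← ENNReal.rpow_mul]
    congr 1
    rw [hpdef]
    field_simp
    norm_num
  set A := {x : EuclideanSpace ℝ (Fin d) | b ≤ ‖x‖ ∧ ‖x‖ ≤ b * Real.exp n} with hA
  have hAmeas : MeasurableSet A :=
    (measurableSet_le measurable_const measurable_norm).inter
      (measurableSet_le measurable_norm measurable_const)
  have hdom : ∀ x, (‖fderiv ℝ χ x‖₊ : ℝ≥0∞) ^ ((d:ℝ)) ≤
      A.indicator (fun x => ENNReal.ofReal (Cc/(n:ℝ)) ^ ((d:ℝ)) *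
        (‖x‖₊ : ℝ≥0∞) ^ (-(d:ℝ))) x := by
    intro x
    by_cases hxA : x ∈ A
    · rw [Set.indicator_of_mem hxA]
      have hx0 : (0:ℝ) < ‖x‖ := lt_of_lt_of_le hb hxA.1
      have hxne : x ≠ 0 := by
        intro h; rw [h] at hx0; simp at hx0
      have h1 : (‖fderiv ℝ χ x‖₊ : ℝ≥0∞) ≤
          ENNReal.ofReal (Cc/(n:ℝ)) * (‖x‖₊ : ℝ≥0∞)⁻¹ := by
        rw [← ofReal_norm_eq_coe_nnnorm, ← ofReal_norm_eq_coe_nnnorm,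
          ← ENNReal.ofReal_inv_of_pos hx0, ← ENNReal.ofReal_mul (by positivity)]
        apply ENNReal.ofReal_le_ofReal
        have heq : Cc/((n:ℝ) * ‖x‖) = Cc/(n:ℝ) * ‖x‖⁻¹ := by
          field_simp
        rw [← heq]
        exact hbd x hxne
      calc (‖fderiv ℝ χ x‖₊ : ℝ≥0∞) ^ ((d:ℝ))
          ≤ (ENNReal.ofReal (Cc/(n:ℝ)) * (‖x‖₊ : ℝ≥0∞)⁻¹) ^ ((d:ℝ)) :=
            ENNReal.rpow_le_rpow h1 (by positivity)
        _ = ENNReal.ofReal (Cc/(n:ℝ)) ^ ((d:ℝ)) * (‖x‖₊ : ℝ≥0∞) ^ (-(d:ℝ)) := by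
            rw [ENNReal.mul_rpow_of_nonneg _ _ (by positivity), ENNReal.inv_rpow,
              ← ENNReal.rpow_neg]
    · rw [Set.indicator_of_notMem hxA, hz x hxA]
      simp [ENNReal.zero_rpow_of_pos (by positivity : (0:ℝ) < (d:ℝ))]
  have hterm1 : (∫⁻ x, f x ^ p) ≤
      ENNReal.ofReal (Cc/(n:ℝ)) ^ ((d:ℝ)) * ((n:ℝ≥0∞) * Cdv) := by
    calc (∫⁻ x, f x ^ p) = ∫⁻ x, (‖fderiv ℝ χ x‖₊ : ℝ≥0∞) ^ ((d:ℝ)) :=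
          lintegral_congr hfp
      _ ≤ ∫⁻ x, A.indicator (fun x => ENNReal.ofReal (Cc/(n:ℝ)) ^ ((d:ℝ)) *
            (‖x‖₊ : ℝ≥0∞) ^ (-(d:ℝ))) x := lintegral_mono hdom
      _ = ∫⁻ x in A, ENNReal.ofReal (Cc/(n:ℝ)) ^ ((d:ℝ)) *
            (‖x‖₊ : ℝ≥0∞) ^ (-(d:ℝ)) := lintegral_indicator hAmeas _
      _ = ENNReal.ofReal (Cc/(n:ℝ)) ^ ((d:ℝ)) *
            ∫⁻ x in A, (‖x‖₊ : ℝ≥0∞) ^ (-(d:ℝ)) :=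
          lintegral_const_mul' _ _
            (ENNReal.rpow_ne_top_of_nonneg (by positivity) ENNReal.ofReal_ne_top)
      _ ≤ ENNReal.ofReal (Cc/(n:ℝ)) ^ ((d:ℝ)) * ((n:ℝ≥0∞) * Cdv) :=
          mul_le_mul_right (shell_lintegral_bound (by omega) hb n) _
  have hterm1' : (∫⁻ x, f x ^ p) ^ (1/p) ≤
      (ENNReal.ofReal Cc ^ (2:ℝ) * Cdv ^ (2/(d:ℝ))) * (n:ℝ≥0∞)⁻¹ := by
    have h1p : 1/p = 2/(d:ℝ) := by rw [hpdef, one_div, inv_div]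
    have hn0 : (n:ℝ≥0∞) ≠ 0 := Nat.cast_ne_zero.2 (by omega)
    have hX : ENNReal.ofReal (Cc/(n:ℝ)) ^ ((d:ℝ)) * ((n:ℝ≥0∞) * Cdv)
        = (ENNReal.ofReal Cc ^ ((d:ℝ)) * Cdv) * (n:ℝ≥0∞) ^ ((1:ℝ)-(d:ℝ)) := by
      rw [ENNReal.ofReal_div_of_pos hnR, ENNReal.ofReal_natCast,
        ENNReal.div_rpow_of_nonneg _ _ (by positivity), div_eq_mul_inv, ← ENNReal.rpow_neg]
      rw [show (1:ℝ) - (d:ℝ) = 1 + -(d:ℝ) by ring,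
        ENNReal.rpow_add _ _ hn0 (ENNReal.natCast_ne_top n), ENNReal.rpow_one]
      ring
    calc (∫⁻ x, f x ^ p) ^ (1/p)
        ≤ (ENNReal.ofReal (Cc/(n:ℝ)) ^ ((d:ℝ)) * ((n:ℝ≥0∞) * Cdv)) ^ (1/p) :=
          ENNReal.rpow_le_rpow hterm1 (by positivity)
      _ = ((ENNReal.ofReal Cc ^ ((d:ℝ)) * Cdv) * (n:ℝ≥0∞) ^ ((1:ℝ)-(d:ℝ))) ^ (2/(d:ℝ)) := by
          rw [hX, h1p]
      _ = (ENNReal.ofReal Cc ^ ((d:ℝ)))^(2/(d:ℝ)) * Cdv^(2/(d:ℝ)) *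
            ((n:ℝ≥0∞) ^ ((1:ℝ)-(d:ℝ)))^(2/(d:ℝ)) := by
          rw [ENNReal.mul_rpow_of_nonneg _ _ (by positivity),
            ENNReal.mul_rpow_of_nonneg _ _ (by positivity)]
      _ = ENNReal.ofReal Cc ^ (2:ℝ) * Cdv^(2/(d:ℝ)) *
            (n:ℝ≥0∞) ^ (((1:ℝ)-(d:ℝ))*(2/(d:ℝ))) := by
          rw [← ENNReal.rpow_mul, ← ENNReal.rpow_mul]
          have hdd : (d:ℝ)*(2/(d:ℝ)) = 2 := by field_simp
          rw [hdd]
      _ ≤ ENNReal.ofReal Cc ^ (2:ℝ) * Cdv^(2/(d:ℝ)) * (n:ℝ≥0∞)⁻¹ := by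
          apply mul_le_mul_right
          rw [← ENNReal.rpow_neg_one]
          apply ENNReal.rpow_le_rpow_of_exponent_le (by exact_mod_cast hn)
          have hee : ((1:ℝ)-(d:ℝ))*(2/(d:ℝ)) = (2-2*(d:ℝ))/(d:ℝ) := by ring
          rw [hee, div_le_iff₀ hd0]
          linarith
  -- term2 : Sobolev side
  have h2d : (2:ℝ) ≤ (d:ℝ) := by linarith
  set P' : ℝ≥0 := 2 * (d:ℝ≥0) / ((d:ℝ≥0) - 2) with hP'
  have hP'r : (P' : ℝ) = 2*(d:ℝ)/((d:ℝ)-2) := by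
    rw [hP', NNReal.coe_div, NNReal.coe_mul,
      NNReal.coe_sub (by exact_mod_cast (by omega : 2 ≤ d))]
    norm_num
  have hP'pos : 0 < (P':ℝ) := by
    rw [hP'r]; exact div_pos (by linarith) (by linarith)
  have hP'ne : P' ≠ 0 := by
    intro h
    rw [h] at hP'pos; simp at hP'pos
  have hq2 : 2 * q = (P':ℝ) := by rw [hP'r, hqdef]; ring
  have hgq : ∀ x, g x ^ q = (‖ψ x‖₊ : ℝ≥0∞) ^ ((P':ℝ)) := by
    intro x
    show (((‖ψ x‖₊ : ℝ≥0∞)) ^ (2:ℕ)) ^ q = _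
    rw [← ENNReal.rpow_natCast _ 2, ← ENNReal.rpow_mul]
    have hcast : ((2:ℕ):ℝ) * q = (P':ℝ) := by push_cast; exact hq2
    rw [hcast]
  have hterm2eq : (∫⁻ x, g x ^ q) ^ (1/q) = (eLpNorm ψ (P' : ℝ≥0∞) volume) ^ (2:ℝ) := by
    rw [lintegral_congr hgq]
    rw [eLpNorm_eq_lintegral_rpow_enorm_toReal (by exact_mod_cast hP'ne) ENNReal.coe_ne_top]
    rw [ENNReal.coe_toReal, ← ENNReal.rpow_mul]
    congr 1
    rw [← hq2]
    field_simp
  have hu1 : ContDiff ℝ 1 ψ := hψ.of_le (by exact_mod_cast le_top)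
  have hfinrank : 0 < Module.finrank ℝ (EuclideanSpace ℝ (Fin d)) := by
    rw [finrank_euclideanSpace_fin]; omega
  have hp'inv : (P' : ℝ)⁻¹ = (((2:ℝ≥0)):ℝ)⁻¹ -
      ((Module.finrank ℝ (EuclideanSpace ℝ (Fin d)) : ℝ))⁻¹ := by
    have hdne : (d:ℝ) ≠ 0 := by linarith
    have hd2ne : (d:ℝ) - 2 ≠ 0 := by linarith
    rw [finrank_euclideanSpace_fin, hP'r, inv_div]
    push_cast
    field_simp
  have hSob := eLpNorm_le_eLpNorm_fderiv_of_eq (F := ℂ)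
    (volume : Measure (EuclideanSpace ℝ (Fin d))) hu1 hψc (p := 2) (p' := P')
    (by norm_num) hfinrank hp'inv
  have hS2 : (eLpNorm ψ (P' : ℝ≥0∞) volume)^(2:ℝ) ≤
      ((SNormLESNormFDerivOfEqConst (F := ℂ)
          (volume : Measure (EuclideanSpace ℝ (Fin d))) (((2:ℝ≥0)):ℝ) : ℝ≥0) : ℝ≥0∞) ^ (2:ℝ) *
        (eLpNorm (fderiv ℝ ψ) ((2:ℝ≥0) : ℝ≥0∞) volume)^(2:ℝ) := by
    rw [← ENNReal.mul_rpow_of_nonneg _ _ (by norm_num : (0:ℝ) ≤ 2)]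
    exact ENNReal.rpow_le_rpow hSob (by norm_num)
  have heq2 : (eLpNorm (fderiv ℝ ψ) ((2:ℝ≥0) : ℝ≥0∞) volume)^(2:ℝ)
      = ∫⁻ x, (‖fderiv ℝ ψ x‖₊ : ℝ≥0∞) ^ (2:ℝ) := by
    rw [eLpNorm_eq_lintegral_rpow_enorm_toReal (by norm_num) (by norm_num), ENNReal.coe_toReal,
      ← ENNReal.rpow_mul]
    norm_num
    rfl
  have hpt : ∀ x, (‖fderiv ℝ ψ x‖₊ : ℝ≥0∞) ^ (2:ℝ) ≤
      ENNReal.ofReal (gradSqC1 d ψ x) := by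
    intro x
    rw [← ofReal_norm_eq_coe_nnnorm,
      show (2:ℝ) = ((2:ℕ):ℝ) by norm_num, ENNReal.rpow_natCast,
      ← ENNReal.ofReal_pow (norm_nonneg _)]
    exact ENNReal.ofReal_le_ofReal (opnorm_sq_le d _)
  have hint := (gradSq_integrable ψ hψ hψc).1
  have hlint : (∫⁻ x, ENNReal.ofReal (gradSqC1 d ψ x)) =
      ENNReal.ofReal (∫ x, gradSqC1 d ψ x) :=
    (MeasureTheory.ofReal_integral_eq_lintegral_ofReal hint
      (Filter.Eventually.of_forall fun x =>
        Finset.sum_nonneg fun i _ => sq_nonneg _)).symm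
  have hterm2 : (∫⁻ x, g x ^ q) ^ (1/q) ≤
      ((SNormLESNormFDerivOfEqConst (F := ℂ)
          (volume : Measure (EuclideanSpace ℝ (Fin d))) (((2:ℝ≥0)):ℝ) : ℝ≥0) : ℝ≥0∞) ^ (2:ℝ) *
        ENNReal.ofReal (∫ x, gradSqC1 d ψ x) := by
    rw [hterm2eq]
    refine le_trans hS2 (mul_le_mul_right ?_ _)
    calc (eLpNorm (fderiv ℝ ψ) ((2:ℝ≥0) : ℝ≥0∞) volume)^(2:ℝ)
        = ∫⁻ x, (‖fderiv ℝ ψ x‖₊ : ℝ≥0∞) ^ (2:ℝ) := heq2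
      _ ≤ ∫⁻ x, ENNReal.ofReal (gradSqC1 d ψ x) := lintegral_mono hpt
      _ = ENNReal.ofReal (∫ x, gradSqC1 d ψ x) := hlint
  -- assemble
  rw [h0]
  have hn0 : (n:ℝ≥0∞) ≠ 0 := Nat.cast_ne_zero.2 (by omega)
  have hRHSne : QcE d Cc * (n:ℝ≥0∞)⁻¹ * ENNReal.ofReal (∫ x, gradSqC1 d ψ x) ≠ ⊤ :=
    ENNReal.mul_ne_top (ENNReal.mul_ne_top (QcE_ne_top d hd Cc)
      (ENNReal.inv_ne_top.2 hn0)) ENNReal.ofReal_ne_top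
  apply ENNReal.toReal_mono hRHSne
  calc (∫⁻ x, f x * g x)
      ≤ (∫⁻ x, f x ^ p) ^ (1/p) * (∫⁻ x, g x ^ q) ^ (1/q) := hHo
    _ ≤ ((ENNReal.ofReal Cc ^ (2:ℝ) * Cdv ^ (2/(d:ℝ))) * (n:ℝ≥0∞)⁻¹) *
        (((SNormLESNormFDerivOfEqConst (F := ℂ)
            (volume : Measure (EuclideanSpace ℝ (Fin d))) (((2:ℝ≥0)):ℝ) : ℝ≥0) : ℝ≥0∞) ^ (2:ℝ) *
          ENNReal.ofReal (∫ x, gradSqC1 d ψ x)) := mul_le_mul' hterm1' hterm2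
    _ = QcE d Cc * (n:ℝ≥0∞)⁻¹ * ENNReal.ofReal (∫ x, gradSqC1 d ψ x) := by
        rw [QcE, ← hCdv]
        ring

lemma chif_lipschitz {d : ℕ} {F : ℝ → ℝ} (hF : ContDiff ℝ 1 F)
    (hF1 : ∀ s, |deriv F s| ≤ 1) {M b L : ℝ} (hM0 : 0 ≤ M)
    (hM : ∀ s, |deriv Real.smoothTransition s| ≤ M)
    (hb : 0 < b) (hL : 0 < L) :
    ∃ K : ℝ≥0, LipschitzWith K (chif (d := d) F b L) := by
  refine ⟨Real.toNNReal (π/2 * M / (L * b)), ?_⟩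
  apply lipschitzWith_of_nnnorm_fderiv_le
    (fun x => (contDiffAt_chif hF hb hL x).differentiableAt one_ne_zero)
  intro x
  rw [← NNReal.coe_le_coe, coe_nnnorm, Real.coe_toNNReal _ (by positivity)]
  rcases lt_or_ge ‖x‖ b with h | h
  · rw [fderiv_chif_inner F hb hL h]
    simp only [norm_zero]
    positivity
  · have hx : x ≠ 0 := by
      intro h0
      rw [h0] at h; simp at h; linarith
    refine le_trans (fderiv_chif_bound hF hF1 hM0 hM hb hL hx) ?_
    have hle : L * b ≤ L * ‖x‖ := mul_le_mul_of_nonneg_left h hL.le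
    exact div_le_div_of_nonneg_left (by positivity) (by positivity) hle
end AuxHardy

open scoped ENNReal NNReal

theorem stmt_1 (d : ℕ) (hd : 3 ≤ d) (ε b : ℝ) (hε : 0 < ε) (hb : 0 < b) :
    ∃ (btil : ℝ) (χ₁ χ₂ : EuclideanSpace ℝ (Fin d) → ℝ)
      (S : Set (EuclideanSpace ℝ (Fin d))),
      b < btil ∧
      (∃ K : NNReal, LipschitzWith K χ₁) ∧
      (∃ K : NNReal, LipschitzWith K χ₂) ∧
      IsClosed S ∧ volume S = 0 ∧
      ContDiffOn ℝ 1 χ₁ Sᶜ ∧ ContDiffOn ℝ 1 χ₂ Sᶜ ∧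
      (∀ x, χ₁ x ^ 2 + χ₂ x ^ 2 = 1) ∧
      (∀ x, ‖x‖ ≤ b → χ₁ x = 1) ∧
      (∀ x, btil < ‖x‖ → χ₁ x = 0) ∧
      (∀ χ ∈ ({χ₁, χ₂} : Set (EuclideanSpace ℝ (Fin d) → ℝ)),
        ∀ ψ : EuclideanSpace ℝ (Fin d) → ℂ,
          ContDiff ℝ (⊤ : ℕ∞) ψ → HasCompactSupport ψ →
          (∫ x, ‖fderiv ℝ χ x‖ ^ 2 * ‖ψ x‖ ^ 2) ≤ 4 * ε * ∫ x, gradSqC1 d ψ x) := by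
  obtain ⟨M, hM1, hM⟩ := exists_M
  have hM0 : (0:ℝ) ≤ M := by linarith
  set Cc : ℝ := Real.pi/2 * M with hCc
  have hCc0 : 0 ≤ Cc := by positivity
  -- choose n
  have hQtop := QcE_ne_top d hd Cc
  have h4ε : ENNReal.ofReal (4*ε) ≠ 0 := by
    simp [ENNReal.ofReal_eq_zero]; linarith
  obtain ⟨n₀, hn₀⟩ := ENNReal.exists_nat_gt
    (ENNReal.div_lt_top hQtop h4ε).ne
  set n : ℕ := max n₀ 1 with hndef
  have hn1 : 1 ≤ n := le_max_right _ _
  have hn0 : (n:ℝ≥0∞) ≠ 0 := Nat.cast_ne_zero.2 (by omega)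
  have hnlt : QcE d Cc / ENNReal.ofReal (4*ε) < (n:ℝ≥0∞) := by
    refine lt_of_lt_of_le hn₀ ?_
    exact_mod_cast Nat.cast_le.2 (le_max_left n₀ 1)
  have hQn : QcE d Cc * (n:ℝ≥0∞)⁻¹ ≤ ENNReal.ofReal (4*ε) := by
    have h1 : QcE d Cc < (n:ℝ≥0∞) * ENNReal.ofReal (4*ε) :=
      (ENNReal.div_lt_iff (Or.inl h4ε) (Or.inl ENNReal.ofReal_ne_top)).1 hnlt
    have h2 := mul_le_mul_left h1.le ((n:ℝ≥0∞)⁻¹)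
    calc QcE d Cc * (n:ℝ≥0∞)⁻¹ ≤ (n:ℝ≥0∞) * ENNReal.ofReal (4*ε) * (n:ℝ≥0∞)⁻¹ := h2
      _ = ENNReal.ofReal (4*ε) * ((n:ℝ≥0∞) * (n:ℝ≥0∞)⁻¹) := by ring
      _ = ENNReal.ofReal (4*ε) := by
          rw [ENNReal.mul_inv_cancel hn0 (ENNReal.natCast_ne_top n), mul_one]
  set L : ℝ := (n:ℝ) with hLdef
  have hL : 0 < L := by rw [hLdef]; exact_mod_cast by omega
  -- cutoffs
  have hcosC : ContDiff ℝ 1 Real.cos := Real.contDiff_cos.of_le (by exact_mod_cast le_top)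
  have hsinC : ContDiff ℝ 1 Real.sin := Real.contDiff_sin.of_le (by exact_mod_cast le_top)
  have hcos1 : ∀ s : ℝ, |deriv Real.cos s| ≤ 1 := by
    intro s; rw [Real.deriv_cos]
    rw [abs_neg]; exact Real.abs_sin_le_one s
  have hsin1 : ∀ s : ℝ, |deriv Real.sin s| ≤ 1 := by
    intro s; rw [Real.deriv_sin]; exact Real.abs_cos_le_one s
  refine ⟨b * Real.exp L, chif Real.cos b L, chif Real.sin b L, ∅, ?_, ?_, ?_, ?_, ?_, ?_, ?_,
    ?_, ?_, ?_, ?_⟩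
  · -- b < btil
    nth_rewrite 1 [← mul_one b]
    exact mul_lt_mul_of_pos_left (Real.one_lt_exp_iff.2 hL) hb
  · -- Lipschitz χ₁
    exact chif_lipschitz hcosC hcos1 hM0 hM hb hL
  · exact chif_lipschitz hsinC hsin1 hM0 hM hb hL
  · exact isClosed_empty
  · simp
  · intro x _
    exact (contDiffAt_chif hcosC hb hL x).contDiffWithinAt
  · intro x _
    exact (contDiffAt_chif hsinC hb hL x).contDiffWithinAt
  · intro x
    exact Real.cos_sq_add_sin_sq _
  · intro x hx
    simp only [chif]
    rw [uu_zero hb hL (norm_nonneg _) hx, Real.cos_zero]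
  · intro x hx
    simp only [chif]
    rw [uu_top hb hL (le_of_lt hx), Real.cos_pi_div_two]
  · -- the integral estimate
    intro χ hχ ψ hψ hψc
    have hχbd : ∀ x : EuclideanSpace ℝ (Fin d), x ≠ 0 →
        ‖fderiv ℝ χ x‖ ≤ Cc / ((n:ℝ) * ‖x‖) := by
      intro x hx
      rcases hχ with h | h
      · rw [h]
        exact fderiv_chif_bound hcosC hcos1 hM0 hM hb hL hx
      · rw [Set.mem_singleton_iff.1 h]
        exact fderiv_chif_bound hsinC hsin1 hM0 hM hb hL hx
    have hχz : ∀ x : EuclideanSpace ℝ (Fin d),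
        ¬(b ≤ ‖x‖ ∧ ‖x‖ ≤ b * Real.exp n) → fderiv ℝ χ x = 0 := by
      intro x hx
      rcases lt_or_ge ‖x‖ b with h | h
      · rcases hχ with hc | hc
        · rw [hc]; exact fderiv_chif_inner _ hb hL h
        · rw [Set.mem_singleton_iff.1 hc]; exact fderiv_chif_inner _ hb hL h
      · have h2 : b * Real.exp n < ‖x‖ := by
          by_contra h3
          push_neg at h3
          exact hx ⟨h, h3⟩
        rcases hχ with hc | hc
        · rw [hc]; exact fderiv_chif_outer _ hb hL h2
        · rw [Set.mem_singleton_iff.1 hc]; exact fderiv_chif_outer _ hb hL h2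
    have hmain := main_estimate hd hb hCc0 hn1 hχz hχbd ψ hψ hψc
    refine le_trans hmain ?_
    have hIg : 0 ≤ ∫ x, gradSqC1 d ψ x :=
      integral_nonneg fun x => Finset.sum_nonneg fun i _ => sq_nonneg _
    have hstep : QcE d Cc * (n:ℝ≥0∞)⁻¹ * ENNReal.ofReal (∫ x, gradSqC1 d ψ x) ≤
        ENNReal.ofReal (4*ε) * ENNReal.ofReal (∫ x, gradSqC1 d ψ x) :=
      mul_le_mul_left hQn _
    calc (QcE d Cc * (n:ℝ≥0∞)⁻¹ * ENNReal.ofReal (∫ x, gradSqC1 d ψ x)).toReal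
        ≤ (ENNReal.ofReal (4*ε) * ENNReal.ofReal (∫ x, gradSqC1 d ψ x)).toReal :=
          ENNReal.toReal_mono
            (ENNReal.mul_ne_top ENNReal.ofReal_ne_top ENNReal.ofReal_ne_top) hstep
      _ = 4 * ε * ∫ x, gradSqC1 d ψ x := by
          rw [ENNReal.toReal_mul, ENNReal.toReal_ofReal (by linarith),
            ENNReal.toReal_ofReal hIg]
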